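/- Let s, t be naturals with s > t ≥ 2 and n := C(s,2) + C(t,2). Let G = (L, R, E) be a bipartite graph with deg_G(a) ≤ 2 for every a ∈ R and with distinct left nodes x_1, …, x_6 ∈ L such that deg_G(x_1) = deg_G(x_2) = s, deg_G(x_3) = deg_G(x_4) = t, deg_G(x_5) = deg_G(x_6) = n + 1, deg_G(u) ≤ 1 for every u ∈ L ∖ {x_1, …, x_6}, β(G) = n + C(n,2), |N_G(x_5) ∩ N_G(x_6)| = n, |N_G(x_1) ∩ N_G(x_2)| = s, and |N_G(x_3) ∩ N_G(x_4)| = t. Suppose a p-BSO (S, σ) applicable to G transforms G into a bipartite graph G' with β(G') = n + C(n,2) and |N_{G'}(x_5) ∩ N_{G'}(x_6)| = n + 1. Then p ≥ 2(s − 1). -/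

import Mathlib

open Finset

variable {L R : Type*} [Fintype L] [DecidableEq L] [Fintype R] [DecidableEq R]

/-- The set of neighbors of a left node `u` in the bipartite graph with edge set `E`. -/
def nbrs (E : Finset (L × R)) (u : L) : Finset R :=
  (E.filter (fun e => e.1 = u)).image Prod.snd

/-- The degree of a left node. -/
def ldeg (E : Finset (L × R)) (u : L) : ℕ := (nbrs E u).card

/-- The set of neighbors of a right node `a` in the bipartite graph with edge set `E`. -/
def rnbrs (E : Finset (L × R)) (a : R) : Finset L :=
  (E.filter (fun e => e.2 = a)).image Prod.fst

/-- The degree of a right node. -/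
def rdeg (E : Finset (L × R)) (a : R) : ℕ := (rnbrs E a).card

/-- The butterflies of the bipartite graph with edge set `E`: a butterfly is a pair of
two left nodes and two right nodes all pairwise connected. -/
def butterflies (E : Finset (L × R)) : Finset (Finset L × Finset R) :=
  Finset.univ.filter
    (fun B => B.1.card = 2 ∧ B.2.card = 2 ∧ ∀ u ∈ B.1, ∀ a ∈ B.2, (u, a) ∈ E)

/-- The total number of butterflies. -/
def bfc (E : Finset (L × R)) : ℕ := (butterflies E).card

/-- The number of butterflies containing the left node `u`. -/
def bfcn (E : Finset (L × R)) (u : L) : ℕ :=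
  ((butterflies E).filter (fun B => u ∈ B.1)).card

/-- The number of butterflies containing both left nodes `u` and `v`. -/
def bfcnn (E : Finset (L × R)) (u v : L) : ℕ :=
  ((butterflies E).filter (fun B => u ∈ B.1 ∧ v ∈ B.1)).card

/-- A `q`-BSO transforming edge set `E` into edge set `E'`. -/
def IsBSOStep (q : ℕ) (E E' : Finset (L × R)) : Prop :=
  1 ≤ q ∧ ∃ (S : Fin q → L × R) (σ : Equiv.Perm (Fin q)),
    Function.Injective S ∧ (∀ j, S j ∈ E) ∧ (∀ j, σ j ≠ j) ∧
    (∀ j, ((S j).1, (S (σ j)).2) ∉ E) ∧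
    E' = (E \ Finset.image S Finset.univ) ∪
      Finset.image (fun j => ((S j).1, (S (σ j)).2)) Finset.univ

set_option linter.unusedSectionVars false in
theorem mem_nbrs' (E : Finset (L × R)) (u : L) (a : R) : a ∈ nbrs E u ↔ (u, a) ∈ E := by
  simp only [nbrs, Finset.mem_image, Finset.mem_filter]
  constructor
  · rintro ⟨⟨b, c⟩, ⟨hmem, h1⟩, h2⟩
    simp only at h1 h2
    subst h1; subst h2; exact hmem
  · intro h; exact ⟨(u, a), ⟨h, rfl⟩, rfl⟩

theorem pair_count (E : Finset (L × R)) (u v : L) (huv : u ≠ v) :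
    ((butterflies E).filter (fun B => B.1 = {u, v})).card
      = ((nbrs E u ∩ nbrs E v).card).choose 2 := by
  rw [← Finset.card_powersetCard]
  apply Finset.card_bij (fun B _ => B.2)
  · intro B hB
    simp only [butterflies, Finset.mem_filter, Finset.mem_univ, true_and] at hB
    obtain ⟨⟨hc1, hc2, hE⟩, h1⟩ := hB
    rw [Finset.mem_powersetCard]
    refine ⟨fun a ha => ?_, hc2⟩
    rw [Finset.mem_inter, mem_nbrs', mem_nbrs']
    exact ⟨hE u (by rw [h1]; simp) a ha, hE v (by rw [h1]; simp) a ha⟩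
  · intro B hB B' hB' h
    simp only [Finset.mem_filter] at hB hB'
    exact Prod.ext (hB.2.trans hB'.2.symm) h
  · intro A hA
    rw [Finset.mem_powersetCard] at hA
    refine ⟨({u, v}, A), ?_, rfl⟩
    simp only [butterflies, Finset.mem_filter, Finset.mem_univ, true_and]
    refine ⟨⟨?_, hA.2, ?_⟩, trivial⟩
    · rw [Finset.card_insert_of_notMem (by simp [huv]), Finset.card_singleton]
    · intro w hw a ha
      have h2 := hA.1 ha
      rw [Finset.mem_inter, mem_nbrs', mem_nbrs'] at h2
      rcases Finset.mem_insert.1 hw with rfl | hw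
      · exact h2.1
      · rw [Finset.mem_singleton] at hw; subst hw; exact h2.2

/-- Any `p`-BSO that, applied to a graph `G` as in the construction (with `x5, x6` sharing
`n` neighbors, `x1, x2` sharing all `s` neighbors, and `x3, x4` sharing all `t` neighbors),
preserves the number of butterflies `n + C(n,2)` and makes `x5` and `x6` share `n + 1`
neighbors, must swap at least `2(s - 1)` edges. -/
theorem stmt_12 {L R : Type*} [Fintype L] [DecidableEq L] [Fintype R] [DecidableEq R]
    (s t n : ℕ) (hts : t < s) (ht : 2 ≤ t) (hn : n = s.choose 2 + t.choose 2)
    (E : Finset (L × R)) (hR : ∀ a : R, rdeg E a ≤ 2)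
    (x1 x2 x3 x4 x5 x6 : L)
    (hdist : List.Pairwise (· ≠ ·) [x1, x2, x3, x4, x5, x6])
    (h1 : ldeg E x1 = s) (h2 : ldeg E x2 = s) (h3 : ldeg E x3 = t) (h4 : ldeg E x4 = t)
    (h5 : ldeg E x5 = n + 1) (h6 : ldeg E x6 = n + 1)
    (hrest : ∀ u : L, u ∉ ({x1, x2, x3, x4, x5, x6} : Finset L) → ldeg E u ≤ 1)
    (hbfc : bfc E = n + n.choose 2)
    (h56 : (nbrs E x5 ∩ nbrs E x6).card = n)
    (h12 : (nbrs E x1 ∩ nbrs E x2).card = s)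
    (h34 : (nbrs E x3 ∩ nbrs E x4).card = t)
    (p : ℕ) (E' : Finset (L × R)) (hstep : IsBSOStep p E E')
    (hbfc' : bfc E' = n + n.choose 2)
    (h56' : (nbrs E' x5 ∩ nbrs E' x6).card = n + 1) :
    2 * (s - 1) ≤ p := by
  obtain ⟨hp1, S, σ, hSinj, hSE, hσ, hnew, hE'⟩ := hstep
  simp only [List.pairwise_cons, List.mem_cons, List.not_mem_nil, List.mem_singleton,
    forall_eq_or_imp, forall_eq, List.Pairwise.nil, and_true] at hdist
  have hne12 : x1 ≠ x2 := hdist.1.1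
  have hne56 : x5 ≠ x6 := by tauto
  have hne51 : x5 ≠ x1 := by tauto
  have hne52 : x5 ≠ x2 := by tauto
  -- Step A: in E', x1 and x2 have at most one common neighbor
  have hA : (nbrs E' x1 ∩ nbrs E' x2).card ≤ 1 := by
    by_contra hc
    push_neg at hc
    have h56c := pair_count E' x5 x6 hne56
    have h12c := pair_count E' x1 x2 hne12
    rw [h56'] at h56c
    have hdisj : Disjoint ((butterflies E').filter (fun B => B.1 = {x5, x6}))
        ((butterflies E').filter (fun B => B.1 = {x1, x2})) := by
      rw [Finset.disjoint_left]
      intro B hB1 hB2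
      rw [Finset.mem_filter] at hB1 hB2
      have : x5 ∈ ({x1, x2} : Finset L) := by
        rw [← hB2.2, hB1.2]; simp
      rcases Finset.mem_insert.1 this with h | h
      · exact hne51 h
      · exact hne52 (Finset.mem_singleton.1 h)
    have hun : ((butterflies E').filter (fun B => B.1 = {x5, x6}) ∪
        (butterflies E').filter (fun B => B.1 = {x1, x2})).card ≤ bfc E' :=
      Finset.card_le_card (Finset.union_subset (Finset.filter_subset _ _)
        (Finset.filter_subset _ _))
    rw [Finset.card_union_of_disjoint hdisj, h56c, h12c, hbfc'] at hun
    have he1 : (n + 1).choose 2 = n + n.choose 2 := by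
      rw [Nat.choose_succ_succ, Nat.choose_one_right, Nat.add_comm]
    have he2 : 0 < ((nbrs E' x1 ∩ nbrs E' x2).card).choose 2 := Nat.choose_pos hc
    omega
  -- Step B: at least s - 1 swapped edges join {x1, x2} to their common neighborhood
  have hD : s ≤ ((nbrs E x1 ∩ nbrs E x2) \ (nbrs E' x1 ∩ nbrs E' x2)).card + 1 := by
    have hsd := Finset.card_le_card_sdiff_add_card (s := nbrs E x1 ∩ nbrs E x2)
      (t := nbrs E' x1 ∩ nbrs E' x2)
    omega
  have key : ∀ a ∈ (nbrs E x1 ∩ nbrs E x2) \ (nbrs E' x1 ∩ nbrs E' x2),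
      ∃ j : Fin p, ((S j).1 = x1 ∨ (S j).1 = x2) ∧ (S j).2 = a := by
    intro a ha
    rw [Finset.mem_sdiff] at ha
    obtain ⟨haC, haC'⟩ := ha
    have haC2 := haC
    rw [Finset.mem_inter, mem_nbrs', mem_nbrs'] at haC2
    have hmiss : (x1, a) ∉ E' ∨ (x2, a) ∉ E' := by
      by_contra hcc
      push_neg at hcc
      exact haC' (Finset.mem_inter.2 ⟨(mem_nbrs' E' x1 a).2 hcc.1, (mem_nbrs' E' x2 a).2 hcc.2⟩)
    rcases hmiss with h | h
    · have him : (x1, a) ∈ Finset.image S Finset.univ := by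
        by_contra him
        apply h
        rw [hE']
        apply Finset.mem_union_left
        exact Finset.mem_sdiff.2 ⟨haC2.1, him⟩
      obtain ⟨j, _, hj⟩ := Finset.mem_image.1 him
      refine ⟨j, Or.inl ?_, ?_⟩
      · rw [hj]
      · rw [hj]
    · have him : (x2, a) ∈ Finset.image S Finset.univ := by
        by_contra him
        apply h
        rw [hE']
        apply Finset.mem_union_left
        exact Finset.mem_sdiff.2 ⟨haC2.2, him⟩
      obtain ⟨j, _, hj⟩ := Finset.mem_image.1 him
      refine ⟨j, Or.inr ?_, ?_⟩
      · rw [hj]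
      · rw [hj]
  set J : Finset (Fin p) := Finset.univ.filter
    (fun j => ((S j).1 = x1 ∨ (S j).1 = x2) ∧ (S j).2 ∈ nbrs E x1 ∩ nbrs E x2) with hJ
  have hJcard : s - 1 ≤ J.card := by
    have hcard : ((nbrs E x1 ∩ nbrs E x2) \ (nbrs E' x1 ∩ nbrs E' x2)).card ≤ J.card := by
      apply Finset.card_le_card_of_injOn
        (fun a => if h : ∃ j : Fin p, ((S j).1 = x1 ∨ (S j).1 = x2) ∧ (S j).2 = a
          then h.choose else ⟨0, hp1⟩)
      · intro a ha
        have hex := key a ha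
        simp only [dif_pos hex]
        obtain ⟨hh1, hh2⟩ := hex.choose_spec
        rw [hJ, Finset.mem_coe, Finset.mem_filter]
        refine ⟨Finset.mem_univ _, hh1, ?_⟩
        rw [hh2]
        exact (Finset.mem_sdiff.1 ha).1
      · intro a ha b hb hfab
        have hea := key a ha
        have heb := key b hb
        simp only [dif_pos hea, dif_pos heb] at hfab
        rw [← hea.choose_spec.2, ← heb.choose_spec.2, hfab]
    omega
  -- Step C: σ maps J outside of J
  have hdisjJ : Disjoint J (J.image σ) := by
    rw [Finset.disjoint_left]
    intro j hj hjim
    obtain ⟨k, hk, hkj⟩ := Finset.mem_image.1 hjim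
    rw [hJ, Finset.mem_filter] at hj hk
    have hne := hnew k
    have h2 : (S (σ k)).2 ∈ nbrs E x1 ∩ nbrs E x2 := by rw [hkj]; exact hj.2.2
    rw [Finset.mem_inter, mem_nbrs', mem_nbrs'] at h2
    rcases hk.2.1 with h | h
    · rw [h] at hne; exact hne h2.1
    · rw [h] at hne; exact hne h2.2
  have himg : (J.image σ).card = J.card :=
    Finset.card_image_of_injective J σ.injective
  have hle : (J ∪ J.image σ).card ≤ p := by
    have h := Finset.card_le_card (Finset.subset_univ (J ∪ J.image σ))
    simpa using h
  rw [Finset.card_union_of_disjoint hdisjJ, himg] at hle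
  omega
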